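/- arXiv:1205.2938 — 7 statements merged into one kernel-verified Lean document; each statement's English description precedes it below -/
import Mathlib

section
/- Let H be a Hilbert space, F : H → H a continuous linear operator with closed range and finite-dimensional kernel, and L ⊆ H a closed subspace. For any index type ι, let T : ℓ²(ι, H) → ℓ²(ι, H) be the continuous linear operator acting componentwise by T(x)ᵢ = F(xᵢ). Then the image under T of the closed subspace {x ∈ ℓ²(ι, H) : xᵢ ∈ L for all i} is a closed subspace of ℓ²(ι, H). -/
open Filter Topology
open scoped ENNReal NNReal

set_option maxHeartbeats 1000000 in
/-- Key functional-analytic lemma: a semi-Fredholm operator maps a closed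
subspace onto a closed set, with a uniform bound on preimages. -/
theorem aux_semiFredholm_bound {𝕜 : Type*} [RCLike 𝕜] {H : Type*} [NormedAddCommGroup H]
    [InnerProductSpace 𝕜 H] [CompleteSpace H]
    (F : H →L[𝕜] H) (hrange : IsClosed (Set.range F))
    (hker : FiniteDimensional 𝕜 (LinearMap.ker (F : H →ₗ[𝕜] H)))
    (L : Submodule 𝕜 H) (hL : IsClosed (L : Set H)) :
    ∃ C : ℝ, 0 < C ∧ IsClosed (F '' (L : Set H)) ∧
      ∀ y ∈ F '' (L : Set H), ∃ x ∈ L, F x = y ∧ ‖x‖ ≤ C * ‖y‖ := by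
  classical
  set N : Submodule 𝕜 H := LinearMap.ker (F : H →ₗ[𝕜] H) with hN
  haveI : FiniteDimensional 𝕜 N := hker
  haveI : CompleteSpace N := FiniteDimensional.complete 𝕜 N
  haveI : CompleteSpace Nᗮ := (N.isClosed_orthogonal).completeSpace_coe
  -- the range as a complete submodule
  set R : Submodule 𝕜 H := LinearMap.range (F : H →ₗ[𝕜] H) with hR
  have hRclosed : IsClosed (R : Set H) := by
    have : (R : Set H) = Set.range F := by
      ext y; simp [hR, LinearMap.mem_range, Set.mem_range]
    rwa [this]
  haveI : CompleteSpace R := hRclosed.completeSpace_coe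
  -- Step A: F is bounded below on Nᗮ
  set G : Nᗮ →L[𝕜] H := F.comp Nᗮ.subtypeL with hG
  have hGmem : ∀ v : Nᗮ, G v ∈ R := fun v => LinearMap.mem_range.2 ⟨v, rfl⟩
  set G' : Nᗮ →L[𝕜] R := G.codRestrict R hGmem with hG'
  have hker' : LinearMap.ker (G' : Nᗮ →ₗ[𝕜] R) = ⊥ := by
    rw [LinearMap.ker_eq_bot']
    intro v hv
    have h1 : F (v : H) = 0 := by
      have := congrArg (Subtype.val) hv
      simpa [hG', hG] using this
    have h2 : (v : H) ∈ N ⊓ Nᗮ := ⟨LinearMap.mem_ker.2 h1, v.2⟩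
    rw [N.inf_orthogonal_eq_bot] at h2
    exact Subtype.ext (by simpa using h2)
  have hsurj' : LinearMap.range (G' : Nᗮ →ₗ[𝕜] R) = ⊤ := by
    rw [LinearMap.range_eq_top]
    rintro ⟨y, hy⟩
    obtain ⟨x, rfl⟩ := LinearMap.mem_range.1 hy
    refine ⟨⟨x - N.orthogonalProjectionOnto x, N.sub_starProjection_mem_orthogonal x⟩, ?_⟩
    apply Subtype.ext
    have hPN : F (N.starProjection x) = 0 :=
      LinearMap.mem_ker.1 (N.orthogonalProjectionOnto x).2
    simp [hG', hG, map_sub, hPN]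
  set e : Nᗮ ≃L[𝕜] R := ContinuousLinearEquiv.ofBijective G' hker' hsurj' with he
  set c1 : ℝ := ‖(e.symm : R →L[𝕜] Nᗮ)‖ with hc1
  have hc1nonneg : 0 ≤ c1 := by rw [hc1]; exact norm_nonneg (e.symm : R →L[𝕜] Nᗮ)
  have hbelow : ∀ v : Nᗮ, ‖(v : H)‖ ≤ c1 * ‖F (v : H)‖ := by
    intro v
    have h1 : v = e.symm (e v) := (e.symm_apply_apply v).symm
    have h2 : ‖e.symm (e v)‖ ≤ c1 * ‖e v‖ :=
      (e.symm : R →L[𝕜] Nᗮ).le_opNorm (e v)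
    have h3 : ‖e v‖ = ‖F (v : H)‖ := by
      have h4 : ((e v : R) : H) = F (v : H) := by
        have h5 : e v = G' v := by rw [he]; rfl
        rw [h5]; rfl
      rw [show ‖e v‖ = ‖((e v : R) : H)‖ from rfl, h4]
    calc ‖(v : H)‖ = ‖v‖ := rfl
      _ = ‖e.symm (e v)‖ := by rw [← h1]
      _ ≤ c1 * ‖e v‖ := h2
      _ = c1 * ‖F (v : H)‖ := by rw [h3]
  -- Step B: replace L by a complement L' of L ⊓ N inside L
  set K : Submodule 𝕜 H := L ⊓ N with hK
  haveI : FiniteDimensional 𝕜 K := Submodule.finiteDimensional_of_le inf_le_right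
  haveI : CompleteSpace K := FiniteDimensional.complete 𝕜 K
  set L' : Submodule 𝕜 H := L ⊓ Kᗮ with hL'def
  have hL'closed : IsClosed (L' : Set H) := by
    rw [hL'def, Submodule.coe_inf]
    exact hL.inter K.isClosed_orthogonal
  have hL'L : ∀ x : H, x ∈ L' → x ∈ L := fun x hx => hx.1
  have himg : F '' (L : Set H) = F '' (L' : Set H) := by
    apply Set.Subset.antisymm
    · rintro _ ⟨x, hx, rfl⟩
      have hPK : (K.orthogonalProjectionOnto x : H) ∈ K := (K.orthogonalProjectionOnto x).2
      refine ⟨x - K.orthogonalProjectionOnto x, ⟨?_, K.sub_starProjection_mem_orthogonal x⟩, ?_⟩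
      · exact Submodule.sub_mem L hx hPK.1
      · have h0 : F (K.starProjection x) = 0 :=
          LinearMap.mem_ker.1 hPK.2
        simp [map_sub, h0]
    · exact Set.image_mono (fun x hx => hL'L x hx)
  have htriv : ∀ x : H, x ∈ L' → x ∈ N → x = 0 := by
    intro x hxL' hxN
    have h1 : x ∈ K ⊓ Kᗮ := ⟨⟨hxL'.1, hxN⟩, hxL'.2⟩
    rw [K.inf_orthogonal_eq_bot] at h1
    simpa using h1
  -- Step C: F is bounded below on L'
  have hC2 : ∃ c2 : ℝ, 0 < c2 ∧ ∀ x ∈ L', ‖x‖ ≤ c2 * ‖F x‖ := by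
    by_contra hcon
    push_neg at hcon
    have hseq : ∀ n : ℕ, ∃ x, x ∈ L' ∧ (n + 1 : ℝ) * ‖F x‖ < ‖x‖ := by
      intro n
      obtain ⟨x, hx, hlt⟩ := hcon (n + 1) (by positivity)
      exact ⟨x, hx, by linarith⟩
    choose u hu hult using hseq
    have hune : ∀ n, u n ≠ 0 := by
      intro n h0
      have h := hult n
      rw [h0] at h
      simp at h
    set w : ℕ → H := fun n => ((‖u n‖ : 𝕜))⁻¹ • u n with hw
    have hwnorm : ∀ n, ‖w n‖ = 1 := fun n => norm_smul_inv_norm (hune n)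
    have hwL' : ∀ n, w n ∈ L' := fun n => L'.smul_mem _ (hu n)
    have hFw : ∀ n, ‖F (w n)‖ ≤ 1 / (n + 1 : ℝ) := by
      intro n
      have hupos : (0 : ℝ) < ‖u n‖ := norm_pos_iff.2 (hune n)
      have h2 : ‖F (u n)‖ < ‖u n‖ / (n + 1 : ℝ) := by
        rw [lt_div_iff₀ (by positivity), mul_comm]
        exact hult n
      have h1 : ‖F (w n)‖ = ‖u n‖⁻¹ * ‖F (u n)‖ := by
        rw [hw]
        simp [map_smul, norm_smul, norm_inv, RCLike.norm_ofReal, abs_of_pos hupos]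
      rw [h1]
      calc ‖u n‖⁻¹ * ‖F (u n)‖ ≤ ‖u n‖⁻¹ * (‖u n‖ / (n + 1 : ℝ)) :=
            mul_le_mul_of_nonneg_left h2.le (inv_pos.2 hupos).le
        _ = 1 / (n + 1 : ℝ) := by field_simp
    have hFw0 : Tendsto (fun n => ‖F (w n)‖) atTop (𝓝 0) := by
      refine squeeze_zero (fun n => norm_nonneg _) hFw ?_
      exact tendsto_one_div_add_atTop_nhds_zero_nat
    set q : ℕ → H := fun n => w n - N.orthogonalProjectionOnto (w n) with hq
    have hqmem : ∀ n, q n ∈ Nᗮ := fun n => N.sub_starProjection_mem_orthogonal (w n)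
    have hqF : ∀ n, F (q n) = F (w n) := by
      intro n
      have h0 : F (N.starProjection (w n)) = 0 :=
        LinearMap.mem_ker.1 (N.orthogonalProjectionOnto (w n)).2
      simp [hq, map_sub, h0]
    have hqle : ∀ n, ‖q n‖ ≤ c1 * ‖F (w n)‖ := by
      intro n
      have := hbelow ⟨q n, hqmem n⟩
      simpa [hqF n] using this
    have hq0 : Tendsto q atTop (𝓝 0) := by
      rw [tendsto_zero_iff_norm_tendsto_zero]
      refine squeeze_zero (fun n => norm_nonneg _) hqle ?_
      simpa using hFw0.const_mul c1
    set p : ℕ → N := fun n => N.orthogonalProjectionOnto (w n) with hp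
    have hpbound : ∀ n, ‖p n‖ ≤ 1 + c1 := by
      intro n
      have h1 : (p n : H) = w n - q n := by simp [hp, hq]
      have h2 : ‖(p n : H)‖ ≤ ‖w n‖ + ‖q n‖ := h1 ▸ norm_sub_le _ _
      have h3 : ‖q n‖ ≤ c1 := by
        calc ‖q n‖ ≤ c1 * ‖F (w n)‖ := hqle n
          _ ≤ c1 * 1 := by
              refine mul_le_mul_of_nonneg_left ?_ hc1nonneg
              calc ‖F (w n)‖ ≤ 1 / (n + 1 : ℝ) := hFw n
                _ ≤ 1 := by
                    rw [div_le_one (by positivity)]; linarith [Nat.cast_nonneg (α := ℝ) n]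
          _ = c1 := mul_one c1
      calc ‖p n‖ = ‖(p n : H)‖ := rfl
        _ ≤ ‖w n‖ + ‖q n‖ := h2
        _ ≤ 1 + c1 := by rw [hwnorm n]; linarith
    haveI : ProperSpace N := FiniteDimensional.proper_rclike 𝕜 N
    have hcompact : IsCompact (Metric.closedBall (0 : N) (1 + c1)) :=
      isCompact_closedBall _ _
    obtain ⟨a, -, φ, hφmono, hconv⟩ :=
      hcompact.tendsto_subseq (fun n => Metric.mem_closedBall.2 (by
        rw [dist_zero_right]; exact hpbound n))
    have hwφ : Tendsto (fun n => w (φ n)) atTop (𝓝 (a : H)) := by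
      have heq : ∀ n, w (φ n) = q (φ n) + (p (φ n) : H) := by
        intro n; simp [hq, hp]
      have h1 : Tendsto (fun n => q (φ n)) atTop (𝓝 0) :=
        hq0.comp hφmono.tendsto_atTop
      have h2 : Tendsto (fun n => (p (φ n) : H)) atTop (𝓝 (a : H)) :=
        (continuous_subtype_val.tendsto a).comp hconv
      have := h1.add h2
      rw [zero_add] at this
      simpa only [← heq] using this
    have haL' : (a : H) ∈ L' :=
      hL'closed.mem_of_tendsto hwφ (Filter.Eventually.of_forall fun n => hwL' _)
    have hanorm : ‖(a : H)‖ = 1 := by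
      have h1 : Tendsto (fun n => ‖w (φ n)‖) atTop (𝓝 ‖(a : H)‖) :=
        (continuous_norm.tendsto _).comp hwφ
      have h2 : Tendsto (fun n => ‖w (φ n)‖) atTop (𝓝 1) := by
        simpa [hwnorm] using tendsto_const_nhds (α := ℝ) (x := (1:ℝ)) (f := atTop (α := ℕ))
      exact tendsto_nhds_unique h1 h2
    have : (a : H) = 0 := htriv _ haL' a.2
    rw [this] at hanorm
    simp at hanorm
  obtain ⟨c2, hc2pos, hc2⟩ := hC2
  -- Step D: conclude
  haveI : CompleteSpace L' := hL'closed.completeSpace_coe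
  set G2 : L' →L[𝕜] H := F.comp L'.subtypeL with hG2
  have h_anti : AntilipschitzWith c2.toNNReal G2 := by
    refine AntilipschitzWith.of_le_mul_dist (fun x y => ?_)
    rw [dist_eq_norm, dist_eq_norm, ← map_sub]
    have hxy : ((x - y : L') : H) ∈ L' := (x - y).2
    calc ‖x - y‖ = ‖((x - y : L') : H)‖ := rfl
      _ ≤ c2 * ‖F ((x - y : L') : H)‖ := hc2 _ hxy
      _ = (c2.toNNReal : ℝ) * ‖G2 (x - y)‖ := by
          rw [Real.coe_toNNReal c2 hc2pos.le]; rfl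
  have hclosedrange : IsClosed (Set.range G2) :=
    h_anti.isClosed_range G2.uniformContinuous
  have him2 : Set.range ⇑G2 = F '' (L' : Set H) := by
    ext y
    constructor
    · rintro ⟨v, rfl⟩; exact ⟨v, v.2, rfl⟩
    · rintro ⟨x, hx, rfl⟩; exact ⟨⟨x, hx⟩, rfl⟩
  refine ⟨c2, hc2pos, ?_, ?_⟩
  · rw [himg, ← him2]; exact hclosedrange
  · intro y hy
    rw [himg] at hy
    obtain ⟨x, hx, rfl⟩ := hy
    exact ⟨x, hL'L x hx, rfl, hc2 x hx⟩

set_option maxHeartbeats 1000000 in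
/-- Corollary 2.1: if `F` has closed range and finite-dimensional kernel, then the
componentwise operator `F ⊗ 1` on `ℓ²(ι, H)` maps the closed subspace
`{x | ∀ i, x i ∈ L}` (i.e. `L ⊗ ℓ²(ι)`) onto a closed subspace. -/
theorem closed_image_componentwise_of_closedRange_finiteDim_ker
    {𝕜 : Type*} [RCLike 𝕜] {H : Type*} [NormedAddCommGroup H]
    [InnerProductSpace 𝕜 H] [CompleteSpace H]
    (F : H →L[𝕜] H) (hrange : IsClosed (Set.range F))
    (hker : FiniteDimensional 𝕜 (LinearMap.ker (F : H →ₗ[𝕜] H)))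
    (L : Submodule 𝕜 H) (hL : IsClosed (L : Set H))
    (ι : Type*)
    (T : lp (fun _ : ι => H) 2 →L[𝕜] lp (fun _ : ι => H) 2)
    (hT : ∀ (x : lp (fun _ : ι => H) 2) (i : ι), (T x : ∀ _ : ι, H) i = F ((x : ∀ _ : ι, H) i)) :
    IsClosed (T '' {x : lp (fun _ : ι => H) 2 | ∀ i, (x : ∀ _ : ι, H) i ∈ L}) := by
  classical
  obtain ⟨C, hCpos, hSclosed, hbound⟩ := aux_semiFredholm_bound F hrange hker L hL
  set S : Set H := F '' (L : Set H) with hS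
  -- evaluation maps are continuous
  have hev : ∀ i : ι, Continuous fun y : lp (fun _ : ι => H) 2 => (y : ∀ _ : ι, H) i := by
    intro i
    refine (LipschitzWith.of_dist_le_mul (K := 1) fun a b => ?_).continuous
    rw [dist_eq_norm, dist_eq_norm, NNReal.coe_one, one_mul]
    have h1 : (a : ∀ _ : ι, H) i - (b : ∀ _ : ι, H) i = ((a - b : lp (fun _ : ι => H) 2) : ∀ _ : ι, H) i := by
      simp [lp.coeFn_sub]
    rw [h1]
    exact lp.norm_apply_le_norm (by norm_num) (a - b) i
  -- the image is the set of sequences with all coordinates in S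
  have hkey : T '' {x : lp (fun _ : ι => H) 2 | ∀ i, (x : ∀ _ : ι, H) i ∈ L}
      = ⋂ i : ι, (fun y : lp (fun _ : ι => H) 2 => (y : ∀ _ : ι, H) i) ⁻¹' S := by
    ext y
    simp only [Set.mem_iInter, Set.mem_preimage, Set.mem_image, Set.mem_setOf_eq]
    constructor
    · rintro ⟨x, hx, rfl⟩ i
      rw [hT]
      exact ⟨_, hx i, rfl⟩
    · intro hy
      choose x hxL hxF using fun i => hy i
      choose z hzL hzF hznorm using fun i => hbound _ ⟨x i, hxL i, hxF i⟩
      have hnat : ∀ r : ℝ, r ^ (2 : ℝ) = r ^ (2 : ℕ) := fun r => by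
        rw [← Real.rpow_natCast r 2]; norm_num
      have hz2 : Memℓp z 2 := by
        apply memℓp_gen
        have ht : (2 : ℝ≥0∞).toReal = 2 := by norm_num
        rw [ht]
        simp only [hnat]
        have hy2 : Summable fun i => ‖(y : ∀ _ : ι, H) i‖ ^ (2 : ℕ) := by
          have h0 := (lp.memℓp y).summable (p := 2) (by norm_num)
          rw [ht] at h0
          simpa only [hnat] using h0
        have hy2' : Summable fun i => C ^ 2 * ‖(y : ∀ _ : ι, H) i‖ ^ (2 : ℕ) :=
          hy2.mul_left _
        refine Summable.of_nonneg_of_le (fun i => by positivity) (fun i => ?_) hy2'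
        calc ‖z i‖ ^ (2 : ℕ) ≤ (C * ‖(y : ∀ _ : ι, H) i‖) ^ (2 : ℕ) :=
              pow_le_pow_left₀ (norm_nonneg _) (hznorm i) 2
          _ = C ^ 2 * ‖(y : ∀ _ : ι, H) i‖ ^ (2 : ℕ) := mul_pow _ _ _
      refine ⟨⟨z, hz2⟩, fun i => hzL i, ?_⟩
      apply lp.ext
      funext i
      rw [hT]
      exact hzF i
  rw [hkey]
  exact isClosed_iInter fun i => hSclosed.preimage (hev i)
end

section
/- The finite-dimensionality hypothesis in the closed-image lemma is necessary: let H = ℓ²(ℕ, ℝ) with standard orthonormal basis (eᵢ), let a : ℕ → ℝ satisfy aᵢ > 0 for all i and aᵢ → 0, let F : H × H → H be the (bounded, surjective) projection F(x, y) = x, and let L ⊆ H × H be the closed linear span of the vectors wᵢ = (aᵢ eᵢ, eᵢ), i ∈ ℕ. Then L is a closed subspace, F is a surjective continuous linear map, and yet the image F(L) is NOT a closed subspace of H. -/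
open Filter

local notation "H₂" => lp (fun _ : ℕ => ℝ) 2

/-- Remark 2.3: the finite-dimensionality of the kernel is necessary. With
`H = ℓ²(ℕ, ℝ)`, `F : H × H → H` the first projection, and `L` the closed span of the
vectors `wᵢ = (aᵢ eᵢ, eᵢ)` where `aᵢ > 0` and `aᵢ → 0`, the subspace `L` is closed and
`F` is a surjective bounded operator, yet `F(L)` is not closed. -/
theorem proj_image_of_closed_span_not_closed
    (a : ℕ → ℝ) (ha : ∀ i, 0 < a i)
    (ha0 : Filter.Tendsto a Filter.atTop (nhds 0)) :
    ∀ (e : ℕ → lp (fun _ : ℕ => ℝ) 2), (∀ i, e i = lp.single 2 i (1 : ℝ)) →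
    ∀ (F : (lp (fun _ : ℕ => ℝ) 2) × (lp (fun _ : ℕ => ℝ) 2) →L[ℝ] lp (fun _ : ℕ => ℝ) 2),
      F = ContinuousLinearMap.fst ℝ _ _ →
    ∀ (w : ℕ → (lp (fun _ : ℕ => ℝ) 2) × (lp (fun _ : ℕ => ℝ) 2)),
      (∀ i, w i = (a i • e i, e i)) →
    ∀ (L : Submodule ℝ ((lp (fun _ : ℕ => ℝ) 2) × (lp (fun _ : ℕ => ℝ) 2))),
      L = (Submodule.span ℝ (Set.range w)).topologicalClosure →
      IsClosed (L : Set ((lp (fun _ : ℕ => ℝ) 2) × (lp (fun _ : ℕ => ℝ) 2))) ∧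
      Function.Surjective F ∧
      ¬ IsClosed (F '' (L : Set ((lp (fun _ : ℕ => ℝ) 2) × (lp (fun _ : ℕ => ℝ) 2)))) := by
  intro e he F hF w hw L hL
  -- coordinate evaluations are continuous
  have hcont : ∀ i : ℕ, Continuous fun f : H₂ => f i := by
    intro i
    refine (LipschitzWith.of_dist_le_mul (K := 1) fun f g => ?_).continuous
    rw [NNReal.coe_one, one_mul, dist_eq_norm, dist_eq_norm]
    have := lp.norm_apply_le_norm (by norm_num : (2 : ENNReal) ≠ 0) (f - g) i
    simpa using this
  refine ⟨?_, ?_, ?_⟩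
  · rw [hL]; exact Submodule.isClosed_topologicalClosure _
  · intro x; exact ⟨(x, 0), by simp [hF]⟩
  intro hFL
  -- the submodule S = {(x,y) | ∀ i, x i = a i * y i}
  set S : Submodule ℝ (H₂ × H₂) :=
    { carrier := {p : H₂ × H₂ | ∀ i, p.1 i = a i * p.2 i}
      add_mem' := by
        intro p q hp hq i
        simp only [Prod.fst_add, Prod.snd_add, lp.coeFn_add, Pi.add_apply]
        rw [hp i, hq i]; ring
      zero_mem' := by intro i; simp
      smul_mem' := by
        intro c p hp i
        simp only [Prod.smul_fst, Prod.smul_snd, lp.coeFn_smul, Pi.smul_apply, smul_eq_mul]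
        rw [hp i]; ring } with hS
  have hSclosed : IsClosed (S : Set (H₂ × H₂)) := by
    have : (S : Set (H₂ × H₂)) = ⋂ i, {p : H₂ × H₂ | p.1 i = a i * p.2 i} := by
      ext p; simp [hS, Set.mem_iInter]; exact Iff.rfl
    rw [this]
    exact isClosed_iInter fun i =>
      isClosed_eq ((hcont i).comp continuous_fst)
        (continuous_const.mul ((hcont i).comp continuous_snd))
  have hwmem : ∀ i, w i ∈ S := by
    intro i j
    rw [hw i]
    show (a i • e i : H₂) j = a j * (e i : H₂) j
    rw [he i]
    simp only [lp.coeFn_smul, Pi.smul_apply, smul_eq_mul]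
    rcases eq_or_ne j i with rfl | hj
    · simp [lp.single_apply_self]
    · simp [lp.single_apply_ne 2 i _ hj, Pi.single_apply, hj]
  have hLS : L ≤ S := by
    rw [hL]
    exact Submodule.topologicalClosure_minimal _
      (Submodule.span_le.2 (Set.range_subset_iff.2 hwmem)) hSclosed
  -- choose a subsequence along which a is small
  obtain ⟨φ, hφ, hφa⟩ : ∃ φ : ℕ → ℕ, StrictMono φ ∧ ∀ k, a (φ k) ≤ (1/2 : ℝ) ^ k :=
    Filter.extraction_forall_of_eventually fun n =>
      ha0.eventually_le_const (by positivity)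
  -- the bad vector x
  set xf : ℕ → ℝ := Set.indicator (Set.range φ) a with hxf
  have hxf_sq : ∀ n, ‖xf n‖ ^ (2 : ℝ) = Set.indicator (Set.range φ) (fun n => a n ^ 2) n := by
    intro n
    rcases em (n ∈ Set.range φ) with h | h
    · rw [hxf, Set.indicator_of_mem h, Set.indicator_of_mem h, Real.norm_eq_abs,
        show (2 : ℝ) = ((2 : ℕ) : ℝ) by norm_num, Real.rpow_natCast, sq_abs]
    · rw [hxf, Set.indicator_of_notMem h, Set.indicator_of_notMem h]
      simp
  have hsum : Summable fun n => ‖xf n‖ ^ (2 : ℝ) := by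
    simp only [hxf_sq]
    rw [← Function.Injective.summable_iff hφ.injective
      (fun n hn => Set.indicator_of_notMem hn _)]
    have hle : ∀ k, (Set.indicator (Set.range φ) (fun n => a n ^ 2) ∘ φ) k ≤ (1/4 : ℝ) ^ k := by
      intro k
      have h1 : Set.indicator (Set.range φ) (fun n => a n ^ 2) (φ k) = a (φ k) ^ 2 :=
        Set.indicator_of_mem (Set.mem_range_self k) _
      rw [Function.comp_apply, h1]
      calc a (φ k) ^ 2 ≤ ((1/2 : ℝ) ^ k) ^ 2 := by
            have h2 := hφa k
            have h3 := (ha (φ k)).le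
            nlinarith
        _ = (1/4 : ℝ) ^ k := by rw [← pow_mul, pow_mul']; norm_num
    refine Summable.of_nonneg_of_le (fun k => ?_) hle
      (summable_geometric_of_lt_one (by norm_num) (by norm_num))
    rcases em (φ k ∈ Set.range φ) with h | h
    · rw [Function.comp_apply, Set.indicator_of_mem h]; positivity
    · rw [Function.comp_apply, Set.indicator_of_notMem h]
  have hxmem : Memℓp xf 2 := memℓp_gen (by simpa using hsum)
  set x : H₂ := ⟨xf, hxmem⟩ with hx
  have hxco : ∀ n, x n = xf n := fun n => rfl
  -- each e i lies in F '' L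
  have heFL : ∀ i, e i ∈ Submodule.map (F : H₂ × H₂ →ₗ[ℝ] H₂) L := by
    intro i
    refine ⟨(a i)⁻¹ • w i, ?_, ?_⟩
    · apply L.smul_mem
      rw [hL]
      exact Submodule.le_topologicalClosure _ (Submodule.subset_span (Set.mem_range_self i))
    · show F ((a i)⁻¹ • w i) = e i
      rw [map_smul, hF, hw i]
      show (a i)⁻¹ • (a i • e i) = e i
      rw [smul_smul, inv_mul_cancel₀ (ha i).ne', one_smul]
  -- x is in the closure of the span of the e i
  have hxcl : x ∈ closure (Submodule.span ℝ (Set.range e) : Set H₂) := by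
    have hhs : HasSum (fun i : ℕ => lp.single 2 i (x i)) x :=
      lp.hasSum_single (by norm_num) x
    refine mem_closure_of_tendsto hhs (Filter.Eventually.of_forall fun s => ?_)
    refine Submodule.sum_mem _ fun i _ => ?_
    have h1 : lp.single 2 i (x i) = x i • e i := by
      rw [he i, ← lp.single_smul, smul_eq_mul, mul_one]
    rw [h1]
    exact Submodule.smul_mem _ _ (Submodule.subset_span (Set.mem_range_self i))
  have hximg : x ∈ F '' (L : Set (H₂ × H₂)) := by
    have h1 : (Submodule.span ℝ (Set.range e) : Set H₂) ⊆ F '' (L : Set (H₂ × H₂)) := by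
      have h2 : F '' (L : Set (H₂ × H₂))
          = (Submodule.map (F : H₂ × H₂ →ₗ[ℝ] H₂) L : Set H₂) := by
        simp [Submodule.map_coe]
      rw [h2]
      exact Submodule.span_le.2 (Set.range_subset_iff.2 heFL)
    have := closure_mono h1 hxcl
    rwa [hFL.closure_eq] at this
  obtain ⟨p, hpL, hpx⟩ := hximg
  have hpS := hLS hpL
  have hp1 : p.1 = x := by rw [← hpx, hF]; rfl
  -- p.2 (φ k) = 1 for all k
  have hp2 : ∀ k, p.2 (φ k) = 1 := by
    intro k
    have h1 : x (φ k) = a (φ k) * p.2 (φ k) := by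
      rw [← hp1]; exact hpS (φ k)
    have h2 : x (φ k) = a (φ k) :=
      (hxco _).trans (Set.indicator_of_mem (Set.mem_range_self k) _)
    have h3 : a (φ k) * 1 = a (φ k) * p.2 (φ k) := by rw [mul_one, ← h1, h2]
    exact (mul_left_cancel₀ (ha (φ k)).ne' h3).symm
  -- but the coordinates of p.2 tend to 0
  have hsum2 : Summable fun n => ‖p.2 n‖ ^ (2 : ℝ) :=
    (lp.memℓp p.2).summable (by norm_num)
  have htend : Tendsto (fun k => ‖p.2 (φ k)‖ ^ (2 : ℝ)) atTop (nhds 0) :=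
    hsum2.tendsto_atTop_zero.comp hφ.tendsto_atTop
  have hconst : Tendsto (fun _ : ℕ => (1 : ℝ)) atTop (nhds 0) := by
    refine htend.congr fun k => ?_
    rw [hp2 k]; norm_num
  exact one_ne_zero (tendsto_nhds_unique tendsto_const_nhds hconst)
end

section
/- Let n ≥ 1 and let f : ℝ → ℝ be differentiable with 0 ≤ −f′(s) < π for every s ∈ ℝ. Let x : ℝ → ℂⁿ satisfy ẋ(t) = (2 · f′(‖x(t)‖²)) • (i · x(t)) for all t, and suppose x is not constant. Then every return time is greater than 1: if T > 0 and x(T) = x(0), then T > 1. -/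
/-- Lemma 4.2 admissibility computation (Hofer–Zehnder): for the radial Hamiltonian
`F(x) = f(‖x‖²)` on `ℂⁿ` with `0 ≤ −f′ < π`, every nonconstant solution of the
Hamiltonian system that returns to its initial value at a time `T > 0` has `T > 1`. -/
theorem radial_hamiltonian_period_gt_one
    (n : ℕ) (hn : 1 ≤ n) (f : ℝ → ℝ) (hf : Differentiable ℝ f)
    (hf' : ∀ s : ℝ, 0 ≤ -deriv f s ∧ -deriv f s < Real.pi)
    (x : ℝ → EuclideanSpace ℂ (Fin n))
    (hx : ∀ t : ℝ, HasDerivAt x ((2 * deriv f (‖x t‖ ^ 2)) • (Complex.I • x t)) t)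
    (hnc : ¬ ∀ t s : ℝ, x t = x s)
    (T : ℝ) (hT : 0 < T) (hret : x T = x 0) : 1 < T := by
  -- Step 1: the norm is constant along the flow.
  have hg : ∀ t : ℝ, HasDerivAt (fun t => ‖x t‖ ^ 2 : ℝ → ℝ) 0 t := by
    intro t
    have h1 := HasDerivAt.inner ℝ (hx t) (hx t)
    have h2 : (inner ℝ (x t) ((2 * deriv f (‖x t‖ ^ 2)) • (Complex.I • x t)) : ℝ)
        + (inner ℝ ((2 * deriv f (‖x t‖ ^ 2)) • (Complex.I • x t)) (x t) : ℝ) = 0 := by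
      rw [real_inner_smul_right, real_inner_smul_left, real_inner_comm (x t)]
      have : (inner ℝ (x t) (Complex.I • x t) : ℝ) = 0 := by
        rw [PiLp.inner_apply]
        apply Finset.sum_eq_zero
        intro i _
        have : (Complex.I • x t) i = Complex.I * x t i := rfl
        rw [this]
        simp [Complex.inner, Complex.mul_re, Complex.mul_im]
        ring
      rw [this]; ring
    have h3 : HasDerivAt (fun t => (inner ℝ (x t) (x t) : ℝ)) 0 t := h2 ▸ h1
    have h4 : (fun t => (inner ℝ (x t) (x t) : ℝ)) = fun t => ‖x t‖ ^ 2 := by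
      funext s; exact real_inner_self_eq_norm_sq (x s)
    rwa [h4] at h3
  have hconst : ∀ t : ℝ, ‖x t‖ ^ 2 = ‖x 0‖ ^ 2 := by
    intro t
    exact is_const_of_deriv_eq_zero (fun s => (hg s).differentiableAt)
      (fun s => (hg s).deriv) t 0
  set a : ℝ := deriv f (‖x 0‖ ^ 2) with ha
  have hxa : ∀ t : ℝ, HasDerivAt x ((2 * a) • (Complex.I • x t)) t := by
    intro t; have := hx t; rwa [hconst t] at this
  -- Step 2: solve the ODE: x t = exp(2a I t) • x 0.
  have hsol : ∀ t : ℝ, x t = Complex.exp ((2 * a : ℝ) * Complex.I * t) • x 0 := by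
    have key : ∀ t : ℝ, HasDerivAt
        (fun t : ℝ => Complex.exp (-((2 * a : ℝ) * Complex.I) * t) • x t) 0 t := by
      intro t
      have he : HasDerivAt (fun t : ℝ => Complex.exp (-((2 * a : ℝ) * Complex.I) * t))
          (-((2 * a : ℝ) * Complex.I) * Complex.exp (-((2 * a : ℝ) * Complex.I) * t)) t := by
        have h1 : HasDerivAt (fun z : ℂ => Complex.exp (-((2 * a : ℝ) * Complex.I) * z))
            (Complex.exp (-((2 * a : ℝ) * Complex.I) * (t : ℂ)) * (-((2 * a : ℝ) * Complex.I) * 1))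
            (t : ℂ) :=
          (Complex.hasDerivAt_exp _).comp (t : ℂ)
            ((hasDerivAt_id (t : ℂ)).const_mul (-((2 * a : ℝ) * Complex.I)))
        have := h1.comp_ofReal
        convert this using 1; ring
      have hs := he.smul (hxa t)
      convert hs using 1
      any_goals rfl
      have hr : ((2 * a : ℝ)) • (Complex.I • x t) = ((2 * a : ℝ) * Complex.I : ℂ) • x t := by
        rw [← algebraMap_smul ℂ (2 * a : ℝ) (Complex.I • x t), smul_smul]
        simp [Complex.coe_algebraMap]
      rw [hr, smul_smul, ← add_smul]
      rw [show (Complex.exp (-(((2 * a : ℝ)) * Complex.I) * (t : ℂ)) * ((2 * a : ℝ) * Complex.I)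
          + -(((2 * a : ℝ)) * Complex.I) * Complex.exp (-(((2 * a : ℝ)) * Complex.I) * (t : ℂ)))
          = 0 by ring, zero_smul]
    intro t
    have hc : Complex.exp (-((2 * a : ℝ) * Complex.I) * t) • x t
        = Complex.exp (-((2 * a : ℝ) * Complex.I) * 0) • x 0 :=
      is_const_of_deriv_eq_zero (fun s => (key s).differentiableAt)
        (fun s => (key s).deriv) t 0
    rw [mul_zero, Complex.exp_zero, one_smul] at hc
    rw [← hc, smul_smul, ← Complex.exp_add]
    rw [show ((2 * a : ℝ) : ℂ) * Complex.I * t + -((2 * a : ℝ) * Complex.I) * t = 0 by ring,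
      Complex.exp_zero, one_smul]
  -- Step 3: a ≠ 0 and x 0 ≠ 0.
  have ha0 : a ≠ 0 := by
    intro h
    apply hnc
    intro t s
    rw [hsol t, hsol s, h]
    norm_num
  have hx0 : x 0 ≠ 0 := by
    intro h
    apply hnc
    intro t s
    rw [hsol t, hsol s, h, smul_zero, smul_zero]
  have haneg : a < 0 := lt_of_le_of_ne (by linarith [(hf' (‖x 0‖ ^ 2)).1]) ha0
  have hapi : -a < Real.pi := by simpa using (hf' (‖x 0‖ ^ 2)).2
  -- Step 4: the return condition forces exp(2aIT) = 1.
  have hexp : Complex.exp ((2 * a : ℝ) * Complex.I * T) = 1 := by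
    have := hret
    rw [hsol T] at this
    by_contra hne
    have : (Complex.exp ((2 * a : ℝ) * Complex.I * T) - 1) • x 0 = 0 := by
      rw [sub_smul, one_smul, this, sub_self]
    rcases smul_eq_zero.mp this with h | h
    · exact hne (by rwa [sub_eq_zero] at h)
    · exact hx0 h
  obtain ⟨k, hk⟩ := Complex.exp_eq_one_iff.mp hexp
  -- Extract the real equation 2aT = 2πk.
  have hreal : 2 * a * T = k * (2 * Real.pi) := by
    have him := congrArg Complex.im hk
    simpa [Complex.mul_im, Complex.mul_re, Real.pi] using him
  have hk1 : (k : ℝ) ≤ -1 := by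
    have hπ := Real.pi_pos
    have : (k : ℝ) * (2 * Real.pi) < 0 := by
      rw [← hreal]; nlinarith
    have hk0 : (k : ℝ) < 0 := by nlinarith
    have : k < 0 := by exact_mod_cast hk0
    have : k ≤ -1 := by omega
    exact_mod_cast this
  -- Conclude T > 1.
  have hAT : a * T ≤ -Real.pi := by nlinarith [Real.pi_pos]
  nlinarith [Real.pi_pos]
end

section
/- For every c ≥ 0 and δ > 0 there exists τ > 0 with the following property. Let H be a real Hilbert space, p ∈ H, and γ : ℝ → H a continuously differentiable curve such that ∫₀¹ ‖γ′(t)‖² dt ≤ c and ∫₀¹ ‖γ(t) − p‖² dt ≤ τ². Then the image γ([0,1]) has diameter at most δ, i.e. ‖γ(s) − γ(t)‖ ≤ δ for all s, t ∈ [0,1]. The constant τ depends only on c and δ, not on H, p, or γ. -/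
open intervalIntegral MeasureTheory
set_option maxHeartbeats 1000000

/-- Cauchy–Schwarz for interval integrals of continuous functions. -/
lemma cs_interval (f : ℝ → ℝ) (hf : Continuous f) {a b : ℝ} (hab : a ≤ b) :
    (∫ t in a..b, f t) ^ 2 ≤ (b - a) * ∫ t in a..b, f t ^ 2 := by
  set L : ℝ := b - a with hL
  have hL0 : 0 ≤ L := by simp [hL]; linarith
  set I : ℝ := ∫ t in a..b, f t with hI
  have h1 : (0:ℝ) ≤ ∫ t in a..b, (L * f t - I) ^ 2 :=
    intervalIntegral.integral_nonneg hab (fun t _ => sq_nonneg _)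
  have h2 : ∫ t in a..b, (L * f t - I) ^ 2
      = L ^ 2 * (∫ t in a..b, f t ^ 2) - 2 * L * I * I + I ^ 2 * L := by
    have hint2 : IntervalIntegrable (fun t => f t ^ 2) volume a b :=
      (hf.pow 2).intervalIntegrable a b
    have hint1 : IntervalIntegrable f volume a b := hf.intervalIntegrable a b
    have : ∀ t, (L * f t - I) ^ 2 = L ^ 2 * f t ^ 2 - 2 * L * I * f t + I ^ 2 := by
      intro t; ring
    simp_rw [this]
    rw [intervalIntegral.integral_add, intervalIntegral.integral_sub,
      intervalIntegral.integral_const_mul, intervalIntegral.integral_const_mul,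
      intervalIntegral.integral_const]
    · simp only [smul_eq_mul]; ring
    · exact hint2.const_mul _
    · exact hint1.const_mul _
    · exact ((hint2.const_mul _).sub (hint1.const_mul _))
    · exact intervalIntegrable_const
  rw [h2] at h1
  rcases eq_or_lt_of_le hab with rfl | hlt
  · simp [hI]
  · have hLpos : 0 < L := by simp [hL]; linarith
    nlinarith

/-- A continuous function attains a value below its average on a nondegenerate interval. -/
lemma exists_mul_le_integral (g : ℝ → ℝ) (hg : Continuous g) {a b : ℝ} (hab : a < b) :
    ∃ u ∈ Set.Icc a b, g u * (b - a) ≤ ∫ t in a..b, g t := by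
  obtain ⟨u, hu, hmin⟩ := (isCompact_Icc (a := a) (b := b)).exists_isMinOn
    ⟨a, Set.left_mem_Icc.mpr hab.le⟩ (hg.continuousOn)
  refine ⟨u, hu, ?_⟩
  have : ∫ t in a..b, g u ≤ ∫ t in a..b, g t := by
    apply intervalIntegral.integral_mono_on hab.le intervalIntegrable_const
      (hg.intervalIntegrable a b)
    intro x hx; exact hmin hx
  simpa [mul_comm] using this

/-- Monotonicity of interval integrals of nonnegative continuous functions under
inclusion of intervals. -/
lemma integral_sub_le (f : ℝ → ℝ) (hf : Continuous f) (hnn : ∀ x, 0 ≤ f x)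
    {a b u v : ℝ} (ha : a ≤ u) (huv : u ≤ v) (hv : v ≤ b) :
    ∫ t in u..v, f t ≤ ∫ t in a..b, f t := by
  have h1 : (∫ t in a..u, f t) + (∫ t in u..b, f t) = ∫ t in a..b, f t :=
    intervalIntegral.integral_add_adjacent_intervals (μ := volume) (hf.intervalIntegrable a u)
      (hf.intervalIntegrable u b)
  have h2 : (∫ t in u..v, f t) + (∫ t in v..b, f t) = ∫ t in u..b, f t :=
    intervalIntegral.integral_add_adjacent_intervals (μ := volume) (hf.intervalIntegrable u v)
      (hf.intervalIntegrable v b)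
  have hau : 0 ≤ ∫ t in a..u, f t :=
    intervalIntegral.integral_nonneg ha (fun t _ => hnn t)
  have hvb : 0 ≤ ∫ t in v..b, f t :=
    intervalIntegral.integral_nonneg hv (fun t _ => hnn t)
  linarith

/-- Step 1 of Proposition 4.2: for every energy bound `c` and every `δ > 0` there is a
`τ > 0`, depending only on `c` and `δ`, such that any C¹ curve `γ` in any real Hilbert
space with `∫₀¹ ‖γ′‖² ≤ c` and `∫₀¹ ‖γ − p‖² ≤ τ²` has image of diameter at most `δ`
on `[0,1]`. -/
theorem small_L2_distance_implies_small_diameter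
    (c : ℝ) (hc : 0 ≤ c) (δ : ℝ) (hδ : 0 < δ) :
    ∃ τ : ℝ, 0 < τ ∧
      ∀ (H : Type) [NormedAddCommGroup H] [InnerProductSpace ℝ H] [CompleteSpace H]
        (p : H) (γ : ℝ → H), ContDiff ℝ 1 γ →
        (∫ t in (0:ℝ)..1, ‖deriv γ t‖ ^ 2) ≤ c →
        (∫ t in (0:ℝ)..1, ‖γ t - p‖ ^ 2) ≤ τ ^ 2 →
        ∀ s ∈ Set.Icc (0:ℝ) 1, ∀ t ∈ Set.Icc (0:ℝ) 1, ‖γ s - γ t‖ ≤ δ := by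
  set h : ℝ := min 1 (δ ^ 2 / (16 * (c + 1))) with hh_def
  have hc1 : (0:ℝ) < c + 1 := by linarith
  have hh0 : 0 < h := lt_min one_pos (by positivity)
  have hh1 : h ≤ 1 := min_le_left _ _
  have hhb : (c + 1) * h ≤ δ ^ 2 / 16 := by
    have := min_le_right 1 (δ ^ 2 / (16 * (c + 1)))
    calc (c + 1) * h ≤ (c + 1) * (δ ^ 2 / (16 * (c + 1))) := by
          exact mul_le_mul_of_nonneg_left this hc1.le
      _ = δ ^ 2 / 16 := by field_simp
  refine ⟨(δ / 4) * Real.sqrt h, by positivity, ?_⟩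
  intro H _ _ _ p γ hγ hE hD
  set τ : ℝ := (δ / 4) * Real.sqrt h with hτ_def
  have hcd : Continuous (deriv γ) := (hγ.iterate_deriv' 0 1).continuous
  have hfd : Continuous fun t => ‖deriv γ t‖ ^ 2 := (hcd.norm.pow 2)
  have hfp : Continuous fun t => ‖γ t - p‖ ^ 2 := ((hγ.continuous.sub continuous_const).norm.pow 2)
  -- main claim: every point of the curve is within δ/2 of p
  have key : ∀ s ∈ Set.Icc (0:ℝ) 1, ‖γ s - p‖ ≤ δ / 2 := by
    rintro s ⟨hs0, hs1⟩
    set a : ℝ := min s (1 - h) with ha_def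
    have ha0 : 0 ≤ a := le_min hs0 (by linarith)
    have has : a ≤ s := min_le_left _ _
    have hsa : s ≤ a + h := by
      rcases le_or_gt s (1 - h) with hcase | hcase
      · have : a = s := min_eq_left hcase; linarith
      · have : a = 1 - h := min_eq_right hcase.le; linarith
    have hah1 : a + h ≤ 1 := by
      have := min_le_right s (1 - h); linarith
    -- energy on the subinterval
    have hEsub : (∫ t in a..(a+h), ‖deriv γ t‖ ^ 2) ≤ c :=
      le_trans (integral_sub_le _ hfd (fun x => sq_nonneg _) ha0 (by linarith) hah1) hE
    have hDsub : (∫ t in a..(a+h), ‖γ t - p‖ ^ 2) ≤ τ ^ 2 :=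
      le_trans (integral_sub_le _ hfp (fun x => sq_nonneg _) ha0 (by linarith) hah1) hD
    -- find u with small distance to p
    obtain ⟨u, hu, hu_le⟩ := exists_mul_le_integral _ hfp (show a < a + h by linarith)
    have hu2 : ‖γ u - p‖ ^ 2 * h ≤ τ ^ 2 := by
      have : a + h - a = h := by ring
      rw [this] at hu_le
      exact le_trans hu_le hDsub
    have hτ2 : τ ^ 2 = δ ^ 2 / 16 * h := by
      rw [hτ_def, mul_pow, Real.sq_sqrt hh0.le]; ring
    have hup : ‖γ u - p‖ ≤ δ / 4 := by
      have h1 : ‖γ u - p‖ ^ 2 ≤ (δ / 4) ^ 2 := by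
        rw [hτ2] at hu2
        have := le_of_mul_le_mul_right hu2 hh0
        nlinarith
      nlinarith [norm_nonneg (γ u - p)]
    -- bound the displacement of γ on [a, a+h]
    have hdisp : ∀ x ∈ Set.Icc a (a+h), ∀ y ∈ Set.Icc a (a+h), x ≤ y →
        ‖γ y - γ x‖ ≤ δ / 4 := by
      rintro x ⟨hx1, hx2⟩ y ⟨hy1, hy2⟩ hxy
      have hftc : ∫ t in x..y, deriv γ t = γ y - γ x := by
        apply intervalIntegral.integral_deriv_eq_sub
        · intro t _; exact (hγ.differentiable one_ne_zero).differentiableAt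
        · exact hcd.intervalIntegrable x y
      rw [← hftc]
      have h1 : ‖∫ t in x..y, deriv γ t‖ ≤ ∫ t in x..y, ‖deriv γ t‖ := by
        rw [intervalIntegral.integral_of_le hxy, intervalIntegral.integral_of_le hxy]
        exact MeasureTheory.norm_integral_le_integral_norm _
      have h2 : (∫ t in x..y, ‖deriv γ t‖) ≤ ∫ t in a..(a+h), ‖deriv γ t‖ :=
        integral_sub_le _ hcd.norm (fun t => norm_nonneg _) hx1 hxy hy2
      have h3 : (∫ t in a..(a+h), ‖deriv γ t‖) ^ 2 ≤ h * c := by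
        have := cs_interval _ hcd.norm (show a ≤ a + h by linarith)
        have heq : a + h - a = h := by ring
        rw [heq] at this
        calc (∫ t in a..(a+h), ‖deriv γ t‖) ^ 2
            ≤ h * ∫ t in a..(a+h), ‖deriv γ t‖ ^ 2 := this
          _ ≤ h * c := mul_le_mul_of_nonneg_left hEsub hh0.le
      have h4 : h * c ≤ (δ / 4) ^ 2 := by nlinarith
      have hI0 : (0:ℝ) ≤ ∫ t in a..(a+h), ‖deriv γ t‖ :=
        intervalIntegral.integral_nonneg (by linarith) (fun t _ => norm_nonneg _)
      have h5 : (∫ t in a..(a+h), ‖deriv γ t‖) ≤ δ / 4 := by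
        nlinarith
      linarith
    have hsu : ‖γ s - γ u‖ ≤ δ / 4 := by
      rcases le_total u s with hle | hle
      · exact hdisp u hu s ⟨has, hsa⟩ hle
      · rw [norm_sub_rev]; exact hdisp s ⟨has, hsa⟩ u hu hle
    calc ‖γ s - p‖ ≤ ‖γ s - γ u‖ + ‖γ u - p‖ := norm_sub_le_norm_sub_add_norm_sub _ _ _
      _ ≤ δ / 4 + δ / 4 := add_le_add hsu hup
      _ = δ / 2 := by ring
  intro s hs t ht
  calc ‖γ s - γ t‖ ≤ ‖γ s - p‖ + ‖γ t - p‖ := by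
        have := norm_sub_le_norm_sub_add_norm_sub (γ s) p (γ t)
        simpa [norm_sub_rev] using this
    _ ≤ δ / 2 + δ / 2 := add_le_add (key s hs) (key t ht)
    _ = δ := by ring
end

section
/- Let E be a real Banach space, X : E → E any map, δ > 0, T > 0, and g : ℝ → ℝ a continuous function with δ ≤ g(t) ≤ 1 for all t. Suppose y : ℝ → E is differentiable with ẏ(t) = g(t) • X(y(t)) for all t ∈ ℝ, and y(T) = y(0). Then there exist T′ with 0 < T′ ≤ T and a differentiable curve z : ℝ → E such that ż(t) = X(z(t)) for all t, z(0) = y(0), z(T′) = z(0), and z([0, T′]) = y([0, T]). In particular, if y is nonconstant on [0, T] then z is a nonconstant closed orbit of X with period at most T. -/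
/-- Sublemma 4.1 (time reparametrization): a closed orbit of the rescaled vector field
`g(t) • X` with `δ ≤ g ≤ 1` yields a genuine closed orbit of `X` of period at most `T`,
with the same initial point and the same image. -/
theorem reparametrized_closed_orbit
    {E : Type*} [NormedAddCommGroup E] [NormedSpace ℝ E]
    (X : E → E) (δ T : ℝ) (hδ : 0 < δ) (hT : 0 < T)
    (g : ℝ → ℝ) (hg : Continuous g) (hgb : ∀ t : ℝ, δ ≤ g t ∧ g t ≤ 1)
    (y : ℝ → E) (hy : ∀ t : ℝ, HasDerivAt y (g t • X (y t)) t) (hyT : y T = y 0) :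
    ∃ T' : ℝ, 0 < T' ∧ T' ≤ T ∧
      ∃ z : ℝ → E,
        (∀ t : ℝ, HasDerivAt z (X (z t)) t) ∧
        z 0 = y 0 ∧ z T' = z 0 ∧
        z '' Set.Icc 0 T' = y '' Set.Icc 0 T := by
  set β : ℝ → ℝ := fun s => ∫ u in (0:ℝ)..s, g u with hβdef
  have hgpos : ∀ t, 0 < g t := fun t => lt_of_lt_of_le hδ (hgb t).1
  have hβ : ∀ s, HasDerivAt β (g s) s := fun s =>
    intervalIntegral.integral_hasDerivAt_right (hg.intervalIntegrable _ _)
      hg.stronglyMeasurable.stronglyMeasurableAtFilter hg.continuousAt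
  have hβmono : StrictMono β := strictMono_of_hasDerivAt_pos hβ hgpos
  have hβ0 : β 0 = 0 := intervalIntegral.integral_same
  -- lower/upper bounds on β
  have hlow : ∀ s : ℝ, 0 ≤ s → δ * s ≤ β s := by
    intro s hs
    have : (∫ u in (0:ℝ)..s, δ) ≤ ∫ u in (0:ℝ)..s, g u := by
      apply intervalIntegral.integral_mono_on hs (intervalIntegrable_const)
        (hg.intervalIntegrable _ _)
      intro x _; exact (hgb x).1
    simpa [intervalIntegral.integral_const, mul_comm] using this
  have hupp : ∀ s : ℝ, 0 ≤ s → β s ≤ s := by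
    intro s hs
    have : (∫ u in (0:ℝ)..s, g u) ≤ ∫ u in (0:ℝ)..s, (1:ℝ) := by
      apply intervalIntegral.integral_mono_on hs (hg.intervalIntegrable _ _)
        intervalIntegrable_const
      intro x _; exact (hgb x).2
    simpa [intervalIntegral.integral_const] using this
  have hneg : ∀ s : ℝ, s ≤ 0 → β s ≤ δ * s := by
    intro s hs
    have h1 : (∫ u in s..(0:ℝ), δ) ≤ ∫ u in s..(0:ℝ), g u := by
      apply intervalIntegral.integral_mono_on hs (intervalIntegrable_const)
        (hg.intervalIntegrable _ _)
      intro x _; exact (hgb x).1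
    have h2 : β s = -∫ u in s..(0:ℝ), g u := intervalIntegral.integral_symm s 0
    rw [h2]
    have : δ * (0 - s) ≤ ∫ u in s..(0:ℝ), g u := by
      simpa [intervalIntegral.integral_const, mul_comm] using h1
    linarith
  have hβcont : Continuous β :=
    continuous_iff_continuousAt.mpr fun s => (hβ s).continuousAt
  -- β is surjective
  have htop : Filter.Tendsto β Filter.atTop Filter.atTop := by
    apply Filter.tendsto_atTop_mono' _ _
      (Filter.Tendsto.const_mul_atTop hδ Filter.tendsto_id)
    filter_upwards [Filter.eventually_ge_atTop (0:ℝ)] with s hs using hlow s hs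
  have hbot : Filter.Tendsto β Filter.atBot Filter.atBot := by
    apply Filter.tendsto_atBot_mono' _ _ (by
      exact Filter.Tendsto.const_mul_atBot hδ Filter.tendsto_id)
    filter_upwards [Filter.eventually_le_atBot (0:ℝ)] with s hs using hneg s hs
  have hβsurj : Function.Surjective β := hβcont.surjective htop hbot
  -- order iso
  let e : ℝ ≃o ℝ := StrictMono.orderIsoOfSurjective β hβmono hβsurj
  let α : ℝ → ℝ := fun t => e.symm t
  have hαcont : Continuous α := e.toHomeomorph.symm.continuous
  have hβα : ∀ t, β (α t) = t := fun t => e.apply_symm_apply t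
  have hα0 : α 0 = 0 := by
    have := hβ0
    have : e 0 = 0 := hβ0
    simpa [α] using congrArg e.symm this ▸ (e.symm_apply_apply 0)
  have hα : ∀ t, HasDerivAt α (g (α t))⁻¹ t := by
    intro t
    exact HasDerivAt.of_local_left_inverse (hαcont.continuousAt)
      (hβ (α t)) (ne_of_gt (hgpos (α t)))
      (Filter.Eventually.of_forall hβα)
  -- the reparametrized curve
  refine ⟨β T, ?_, ?_, fun t => y (α t), ?_, ?_, ?_, ?_⟩
  · have := hβmono hT; rwa [hβ0] at this
  · exact hupp T hT.le
  · intro t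
    have h := (hy (α t)).scomp t (hα t)
    have : (g (α t))⁻¹ • g (α t) • X (y (α t)) = X (y (α t)) := by
      rw [smul_smul, inv_mul_cancel₀ (ne_of_gt (hgpos (α t))), one_smul]
    rwa [this] at h
  · show y (α 0) = y 0; rw [hα0]
  · have : α (β T) = T := e.symm_apply_apply T
    show y (α (β T)) = y (α 0); rw [this, hα0, hyT]
  · have himg : α '' Set.Icc 0 (β T) = Set.Icc 0 T := by
      have := e.symm.image_Icc (0 : ℝ) (β T)
      have h2 : e.symm (β T) = T := e.symm_apply_apply T
      have h3 : e.symm 0 = (0:ℝ) := by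
        have h := hα0; simpa [α] using h
      simpa [α, h2, h3] using this
    rw [← himg, Set.image_image]
end

section
/- For every natural number M there exists ε₀ > 0 with the following property. Let H be a real inner product space, V ⊆ H a linear subspace whose codimension is at most M (i.e. the quotient H/V has dimension ≤ M), and let 0 ≤ ε < ε₀. Then there do NOT exist vectors u₁, …, u_{M+1} ∈ H satisfying simultaneously: (i) 1 − ε ≤ ‖uᵢ‖² ≤ 1 for all i; (ii) |⟨uᵢ, uⱼ⟩| ≤ ε for all i ≠ j; (iii) |⟨v, uᵢ⟩| ≤ ε‖v‖ for all v ∈ V and all i. -/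
/-- Quantitative engine of Proposition 2.2: for every `M` there is `ε₀ > 0` such that no
real inner ℝ product space contains `M+1` vectors that are `ε`-almost orthonormal and
`ε`-almost orthogonal to a subspace of codimension at most `M`, for any `0 ≤ ε < ε₀`. -/
theorem no_almost_orthonormal_family_orthogonal_to_small_codim
    (M : ℕ) :
    ∃ ε₀ : ℝ, 0 < ε₀ ∧
      ∀ (H : Type) [NormedAddCommGroup H] [InnerProductSpace ℝ H]
        (V : Submodule ℝ H), FiniteDimensional ℝ (H ⧸ V) →
        Module.finrank ℝ (H ⧸ V) ≤ M →
        ∀ ε : ℝ, 0 ≤ ε → ε < ε₀ →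
          ¬ ∃ u : Fin (M + 1) → H,
              (∀ i, 1 - ε ≤ ‖u i‖ ^ 2 ∧ ‖u i‖ ^ 2 ≤ 1) ∧
              (∀ i j, i ≠ j → |(inner ℝ (u i) (u j) : ℝ)| ≤ ε) ∧
              (∀ v ∈ V, ∀ i, |(inner ℝ v (u i) : ℝ)| ≤ ε * ‖v‖) := by
  refine ⟨1 / (2 * M + 3), by positivity, ?_⟩
  intro H _ _ V _ hV ε hε0 hε ⟨u, hnorm, horth, hVu⟩
  -- the composite map (coefficients) → H → H/V
  set L : (Fin (M + 1) → ℝ) →ₗ[ℝ] H ⧸ V :=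
    V.mkQ.comp (Fintype.linearCombination ℝ u) with hL
  have hnotinj : ¬ Function.Injective L := by
    intro hinj
    have := LinearMap.finrank_le_finrank_of_injective hinj
    rw [Module.finrank_pi] at this
    simp only [Fintype.card_fin] at this
    omega
  rw [Function.not_injective_iff] at hnotinj
  obtain ⟨x, y, hxy, hne⟩ := hnotinj
  set c : Fin (M + 1) → ℝ := x - y with hc
  have hc0 : c ≠ 0 := sub_ne_zero.mpr hne
  have hLc : L c = 0 := by rw [hc, map_sub, hxy, sub_self]
  set w : H := ∑ j, c j • u j with hw
  have hwV : w ∈ V := by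
    have : V.mkQ w = 0 := by
      simpa [hL, hw, Fintype.linearCombination_apply] using hLc
    rwa [Submodule.mkQ_apply, Submodule.Quotient.mk_eq_zero] at this
  -- pick the index with maximal |c i|
  obtain ⟨i, -, hi⟩ := Finset.exists_max_image Finset.univ (fun j => |c j|)
    ⟨0, Finset.mem_univ 0⟩
  simp only [Finset.mem_univ, forall_true_left] at hi
  set m : ℝ := |c i| with hm
  have hm0 : 0 < m := by
    rcases Function.ne_iff.mp hc0 with ⟨j, hj⟩
    exact lt_of_lt_of_le (abs_pos.mpr hj) (hi j)
  -- norms of u j are ≤ 1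
  have hun : ∀ j, ‖u j‖ ≤ 1 := by
    intro j
    nlinarith [(hnorm j).2, norm_nonneg (u j)]
  -- bound ‖w‖ ≤ (M+1) * m
  have hwnorm : ‖w‖ ≤ (M + 1) * m := by
    calc ‖w‖ ≤ ∑ j, ‖c j • u j‖ := norm_sum_le _ _
      _ ≤ ∑ _j : Fin (M + 1), m := by
          refine Finset.sum_le_sum fun j _ => ?_
          rw [norm_smul, Real.norm_eq_abs]
          calc |c j| * ‖u j‖ ≤ |c j| * 1 :=
                mul_le_mul_of_nonneg_left (hun j) (abs_nonneg _)
            _ = |c j| := mul_one _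
            _ ≤ m := hi j
      _ = (M + 1) * m := by simp [Finset.sum_const, mul_comm]
  -- inner product expansion
  have hinner : (inner ℝ w (u i) : ℝ) = ∑ j, c j * inner ℝ (u j) (u i) := by
    rw [hw, sum_inner]
    exact Finset.sum_congr rfl fun j _ => real_inner_smul_left _ _ _
  -- lower bound on |⟨w, u i⟩|
  have hsplit : (inner ℝ w (u i) : ℝ) =
      c i * inner ℝ (u i) (u i) + ∑ j ∈ Finset.univ.erase i, c j * inner ℝ (u j) (u i) := by
    rw [hinner, ← Finset.add_sum_erase _ _ (Finset.mem_univ i)]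
  have htail : |∑ j ∈ Finset.univ.erase i, c j * (inner ℝ (u j) (u i) : ℝ)| ≤ M * (m * ε) := by
    calc |∑ j ∈ Finset.univ.erase i, c j * (inner ℝ (u j) (u i) : ℝ)|
        ≤ ∑ j ∈ Finset.univ.erase i, |c j * (inner ℝ (u j) (u i) : ℝ)| :=
          Finset.abs_sum_le_sum_abs _ _
      _ ≤ ∑ _j ∈ Finset.univ.erase i, m * ε := by
          refine Finset.sum_le_sum fun j hj => ?_
          rw [abs_mul]
          exact mul_le_mul (hi j)
            (horth j i (Finset.ne_of_mem_erase hj)) (abs_nonneg _) hm0.le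
      _ = M * (m * ε) := by
          rw [Finset.sum_const, Finset.card_erase_of_mem (Finset.mem_univ i)]
          simp
  have hhead : m * (1 - ε) ≤ |c i * (inner ℝ (u i) (u i) : ℝ)| := by
    have hii : |(inner ℝ (u i) (u i) : ℝ)| = ‖u i‖ ^ 2 := by
      rw [real_inner_self_eq_norm_sq]
      exact abs_of_nonneg (sq_nonneg _)
    rw [abs_mul, hii]
    have h1 : 1 - ε ≤ ‖u i‖ ^ 2 := (hnorm i).1
    have : m * (1 - ε) ≤ m * ‖u i‖ ^ 2 := mul_le_mul_of_nonneg_left h1 hm0.le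
    simpa [hm] using this
  have hlow : m * (1 - ε) - M * (m * ε) ≤ |(inner ℝ w (u i) : ℝ)| := by
    have := abs_sub_abs_le_abs_sub (c i * (inner ℝ (u i) (u i) : ℝ)) (-(∑ j ∈ Finset.univ.erase i, c j * (inner ℝ (u j) (u i) : ℝ)))
    rw [abs_neg, sub_neg_eq_add, ← hsplit] at this
    linarith
  have hup : |(inner ℝ w (u i) : ℝ)| ≤ ε * ((M + 1) * m) :=
    le_trans (hVu w hwV i) (mul_le_mul_of_nonneg_left hwnorm hε0)
  have h3 : (0:ℝ) < 2 * M + 3 := by positivity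
  have hεM : ε * (2 * M + 3) < 1 := by
    calc ε * (2 * M + 3) < (1 / (2 * M + 3)) * (2 * M + 3) :=
          mul_lt_mul_of_pos_right hε h3
      _ = 1 := by field_simp
  have hfin := hlow.trans hup
  nlinarith [hm0, hε0, hεM, hfin, mul_pos hm0 h3]
end

section
/- Let B = {x ∈ ℓ²(ℕ, ℝ) : |xᵢ| ≤ 1/2 for all i} and define H : B → ℝ by H(x) = exp(−∑ᵢ |xᵢ|/(1 − |xᵢ|)) when the series ∑ᵢ |xᵢ|/(1 − |xᵢ|) is summable, and H(x) = 0 otherwise (so that H(x) is the value of the infinite product ∏ᵢ exp(−|xᵢ|/(1 − |xᵢ|))). Then H(0) = 1, yet H is not continuous at 0: there is a sequence p(l) ∈ B with ‖p(l)‖_{ℓ²} → 0 and H(p(l)) = 0 for every l. -/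
open scoped Classical in
/-- The infinite product `H = ∏ᵢ exp(−|xᵢ|/(1−|xᵢ|))` of the paper's Example 1.1:
its value is `exp(−∑ᵢ |xᵢ|/(1−|xᵢ|))` when the series is summable and `0` otherwise
(the divergent product has value `0`). -/
noncomputable def Hprod (x : lp (fun _ : ℕ => ℝ) 2) : ℝ :=
  if Summable (fun i : ℕ => |(x : ∀ _ : ℕ, ℝ) i| / (1 - |(x : ∀ _ : ℕ, ℝ) i|)) then
    Real.exp (-∑' i : ℕ, |(x : ∀ _ : ℕ, ℝ) i| / (1 - |(x : ∀ _ : ℕ, ℝ) i|))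
  else 0

lemma qmem : Memℓp (fun i : ℕ => ((i : ℝ) + 1)⁻¹) 2 := by
  apply memℓp_gen
  have h2 : (2 : ENNReal).toReal = 2 := by norm_num
  rw [h2]
  have : Summable (fun i : ℕ => (((i : ℝ) + 1)⁻¹) ^ 2) := by
    have := Real.summable_one_div_nat_pow.mpr (by norm_num : 1 < 2)
    have h := (summable_nat_add_iff 1).mpr this
    simpa [one_div] using h
  simpa [abs_of_nonneg, Real.norm_eq_abs, abs_inv, abs_of_nonneg (by positivity : (0:ℝ) ≤ (_:ℕ) + 1)] using this

noncomputable def qel : lp (fun _ : ℕ => ℝ) 2 := ⟨fun i => ((i : ℝ) + 1)⁻¹, qmem⟩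

/-- Example 1.1 (2): `H(0) = 1`, yet `H` is not continuous at `0` on the cube
`B = {x : |xᵢ| ≤ 1/2}`: there are points `p(l) ∈ B` with `‖p(l)‖_{ℓ²} → 0` but
`H(p(l)) = 0` for every `l`. -/
theorem infinite_product_not_continuous_at_zero :
    Hprod 0 = 1 ∧
    ∃ p : ℕ → lp (fun _ : ℕ => ℝ) 2,
      (∀ l i, |(p l : ∀ _ : ℕ, ℝ) i| ≤ 1 / 2) ∧
      Filter.Tendsto (fun l => ‖p l‖) Filter.atTop (nhds 0) ∧
      ∀ l, Hprod (p l) = 0 := by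
  constructor
  · have h0 : ((0 : lp (fun _ : ℕ => ℝ) 2) : ∀ _ : ℕ, ℝ) = 0 := lp.coeFn_zero _ _
    simp [Hprod, h0, summable_zero]
  · refine ⟨fun l => (((l : ℝ) + 2)⁻¹) • qel, ?_, ?_, ?_⟩
    · intro l i
      have hc : ((((l : ℝ) + 2)⁻¹ • qel : lp (fun _ : ℕ => ℝ) 2) : ∀ _ : ℕ, ℝ) i
          = ((l : ℝ) + 2)⁻¹ * ((i : ℝ) + 1)⁻¹ := by
        rw [lp.coeFn_smul]; rfl
      rw [hc, abs_mul, abs_inv, abs_inv,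
        abs_of_nonneg (by positivity : (0:ℝ) ≤ (l : ℝ) + 2),
        abs_of_nonneg (by positivity : (0:ℝ) ≤ (i : ℝ) + 1), ← mul_inv]
      rw [one_div]
      apply inv_anti₀ (by norm_num)
      have h1 : (2 : ℝ) ≤ (l : ℝ) + 2 := by linarith [Nat.cast_nonneg (α := ℝ) l]
      have h2 : (1 : ℝ) ≤ (i : ℝ) + 1 := by linarith [Nat.cast_nonneg (α := ℝ) i]
      nlinarith
    · have : ∀ l : ℕ, ‖(((l : ℝ) + 2)⁻¹) • qel‖ = ((l : ℝ) + 2)⁻¹ * ‖qel‖ := by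
        intro l
        rw [norm_smul, Real.norm_eq_abs, abs_inv, abs_of_nonneg (by positivity : (0:ℝ) ≤ (l:ℝ)+2)]
      simp only [this]
      have : Filter.Tendsto (fun l : ℕ => ((l : ℝ) + 2)⁻¹) Filter.atTop (nhds 0) := by
        apply Filter.Tendsto.inv_tendsto_atTop
        exact Filter.tendsto_atTop_add_const_right _ 2 tendsto_natCast_atTop_atTop
      simpa using this.mul_const ‖qel‖
    · intro l
      have hc : ∀ i, ((((l : ℝ) + 2)⁻¹ • qel : lp (fun _ : ℕ => ℝ) 2) : ∀ _ : ℕ, ℝ) i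
          = ((l : ℝ) + 2)⁻¹ * ((i : ℝ) + 1)⁻¹ := by
        intro i; rw [lp.coeFn_smul]; rfl
      rw [Hprod, if_neg]
      intro hs
      -- comparison: x/(1-x) ≥ x for x ∈ [0, 1/2]
      have habs : ∀ i : ℕ, |((((l : ℝ) + 2)⁻¹ • qel : lp (fun _ : ℕ => ℝ) 2) : ∀ _ : ℕ, ℝ) i|
          = ((l : ℝ) + 2)⁻¹ * ((i : ℝ) + 1)⁻¹ := by
        intro i; rw [hc i, abs_mul, abs_inv, abs_inv,
          abs_of_nonneg (by positivity : (0:ℝ) ≤ (l : ℝ) + 2),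
          abs_of_nonneg (by positivity : (0:ℝ) ≤ (i : ℝ) + 1)]
      have hbound : ∀ i : ℕ, ((l : ℝ) + 2)⁻¹ * ((i : ℝ) + 1)⁻¹ ≤ 1/2 := by
        intro i
        have h1 : (2 : ℝ) ≤ ((l : ℝ) + 2) * ((i : ℝ) + 1) := by nlinarith [Nat.cast_nonneg (α := ℝ) l, Nat.cast_nonneg (α := ℝ) i]
        rw [← mul_inv, one_div]
        exact inv_anti₀ (by norm_num) h1
      have hle : ∀ i : ℕ, ((l : ℝ) + 2)⁻¹ * ((i : ℝ) + 1)⁻¹ ≤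
          |((((l : ℝ) + 2)⁻¹ • qel : lp (fun _ : ℕ => ℝ) 2) : ∀ _ : ℕ, ℝ) i| /
            (1 - |((((l : ℝ) + 2)⁻¹ • qel : lp (fun _ : ℕ => ℝ) 2) : ∀ _ : ℕ, ℝ) i|) := by
        intro i
        rw [habs i]
        set a := ((l : ℝ) + 2)⁻¹ * ((i : ℝ) + 1)⁻¹ with ha
        have ha0 : 0 ≤ a := by positivity
        have ha2 : a ≤ 1/2 := hbound i
        have hden : 0 < 1 - a := by linarith
        rw [le_div_iff₀ hden]
        nlinarith
      have hsum : Summable (fun i : ℕ => ((l : ℝ) + 2)⁻¹ * ((i : ℝ) + 1)⁻¹) := by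
        apply Summable.of_nonneg_of_le (fun i => by positivity) hle hs
      have hsum2 : Summable (fun i : ℕ => ((i : ℝ) + 1)⁻¹) := by
        have := hsum.mul_left ((l : ℝ) + 2)
        have hne : ((l : ℝ) + 2) ≠ 0 := by positivity
        simpa [← mul_assoc, mul_inv_cancel₀ hne] using this
      have : Summable (fun i : ℕ => ((i : ℝ))⁻¹) := by
        rw [← summable_nat_add_iff 1]
        simpa using hsum2
      exact Real.not_summable_natCast_inv (by simpa using this)
end
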